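/- If B = (b_{i_1...i_m}) in T_{m,n} is a B tensor, then for each i, b_{i...i} > max{0, b_{i j_2...j_m} : (j_2,...,j_m) != (i,...,i)}; if B is a B_0 tensor then the same holds with >=. -/

import Mathlib

open Finset

noncomputable section

/-- The contraction `(A x^{m})_i` of an order-`m+1` tensor with `m` copies of `x`. -/
def contrT {m n : ℕ} (A : (Fin (m+1) → Fin n) → ℝ) (x : Fin n → ℝ) (i : Fin n) : ℝ :=
  ∑ f : Fin m → Fin n, A (Fin.cons i f) * ∏ k, x (f k)

/-- `A x^M` for an order-`M` tensor. -/
def polyT {M n : ℕ} (A : (Fin M → Fin n) → ℝ) (x : Fin n → ℝ) : ℝ :=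
  ∑ f : Fin M → Fin n, A f * ∏ k, x (f k)

/-- P tensor: for every nonzero `x`, `max_i x_i (A x^{m-1})_i > 0`. -/
def IsPTensor {m n : ℕ} (A : (Fin (m+1) → Fin n) → ℝ) : Prop :=
  ∀ x : Fin n → ℝ, x ≠ 0 → ∃ i : Fin n, 0 < x i * contrT A x i

/-- P₀ tensor: for every nonzero `x` there is `i` with `x i ≠ 0` and `x_i (A x^{m-1})_i ≥ 0`. -/
def IsP0Tensor {m n : ℕ} (A : (Fin (m+1) → Fin n) → ℝ) : Prop :=
  ∀ x : Fin n → ℝ, x ≠ 0 → ∃ i : Fin n, x i ≠ 0 ∧ 0 ≤ x i * contrT A x i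

def infNorm {n : ℕ} (x : Fin n → ℝ) : ℝ := ⨆ i, |x i|

/-- The operator `T_A(x) = ‖x‖₂^{2-m} A x^{m-1}` (order of the tensor is `m+1`). -/
def TA {m n : ℕ} (A : (Fin (m+1) → Fin n) → ℝ) (x : Fin n → ℝ) (i : Fin n) : ℝ :=
  if x = 0 then 0
  else (Real.sqrt (∑ j, x j ^ 2)) ^ ((2 : ℤ) - ((m : ℤ) + 1)) * contrT A x i

/-- `α(T_A) = min_{‖x‖_∞ = 1} max_i x_i (T_A(x))_i`. -/
def alphaT {m n : ℕ} (A : (Fin (m+1) → Fin n) → ℝ) : ℝ :=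
  sInf ((fun x => ⨆ i, x i * TA A x i) '' {x : Fin n → ℝ | infNorm x = 1})

/-- B tensor of order `m+1`. -/
def IsBTensor {m n : ℕ} (B : (Fin (m+1) → Fin n) → ℝ) : Prop :=
  ∀ i : Fin n, (0 < ∑ f : Fin m → Fin n, B (Fin.cons i f)) ∧
    ∀ g : Fin m → Fin n, g ≠ (fun _ => i) →
      B (Fin.cons i g) < (1 / (n : ℝ) ^ m) * ∑ f : Fin m → Fin n, B (Fin.cons i f)

/-- B₀ tensor of order `m+1`. -/
def IsB0Tensor {m n : ℕ} (B : (Fin (m+1) → Fin n) → ℝ) : Prop :=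
  ∀ i : Fin n, (0 ≤ ∑ f : Fin m → Fin n, B (Fin.cons i f)) ∧
    ∀ g : Fin m → Fin n, g ≠ (fun _ => i) →
      B (Fin.cons i g) ≤ (1 / (n : ℝ) ^ m) * ∑ f : Fin m → Fin n, B (Fin.cons i f)


lemma keyB0 {m n : ℕ} (B : (Fin (m+1) → Fin n) → ℝ) (i : Fin n)
    (h : ∀ g : Fin m → Fin n, g ≠ (fun _ => i) →
      B (Fin.cons i g) ≤ (1 / (n : ℝ) ^ m) * ∑ f : Fin m → Fin n, B (Fin.cons i f)) :
    (1 / (n : ℝ) ^ m) * ∑ f : Fin m → Fin n, B (Fin.cons i f) ≤ B (fun _ => i) := by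
  have hn : 0 < n := i.pos
  have hN : (0:ℝ) < (n:ℝ)^m := by positivity
  set S := ∑ f : Fin m → Fin n, B (Fin.cons i f) with hS
  set d : Fin m → Fin n := fun _ => i with hd
  have hcons : Fin.cons i d = fun _ => i := by
    funext j; exact Fin.cases rfl (fun k => rfl) j
  have hsplit : B (Fin.cons i d) + ∑ f ∈ Finset.univ.erase d, B (Fin.cons i f) = S :=
    Finset.add_sum_erase _ (fun f => B (Fin.cons i f)) (Finset.mem_univ d)
  have hbound : ∑ f ∈ Finset.univ.erase d, B (Fin.cons i f)
      ≤ ((Finset.univ.erase d).card : ℝ) * ((1/(n:ℝ)^m) * S) := by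
    calc ∑ f ∈ Finset.univ.erase d, B (Fin.cons i f)
        ≤ ∑ _f ∈ Finset.univ.erase d, (1/(n:ℝ)^m) * S :=
          Finset.sum_le_sum (fun f hf => h f (Finset.mem_erase.mp hf).1)
      _ = ((Finset.univ.erase d).card : ℝ) * ((1/(n:ℝ)^m) * S) := by
          rw [Finset.sum_const, nsmul_eq_mul]
  have hone : 1 ≤ n ^ m := Nat.one_le_pow _ _ hn
  have hcard : ((Finset.univ.erase d).card : ℝ) = (n:ℝ)^m - 1 := by
    rw [Finset.card_erase_of_mem (Finset.mem_univ d), Finset.card_univ]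
    have : Fintype.card (Fin m → Fin n) = n ^ m := by
      rw [Fintype.card_fun, Fintype.card_fin, Fintype.card_fin]
    rw [this, Nat.cast_sub hone]
    push_cast
    ring
  rw [hcard] at hbound
  rw [hcons] at hsplit
  have h1 : ((n:ℝ)^m - 1) * (1/(n:ℝ)^m * S) = S - 1/(n:ℝ)^m * S := by
    field_simp
  linarith

theorem stmt17 (m n : ℕ) (B : (Fin (m+1) → Fin n) → ℝ) :
    (IsBTensor B → ∀ i : Fin n,
      0 < B (fun _ => i) ∧
        ∀ g : Fin m → Fin n, g ≠ (fun _ => i) → B (Fin.cons i g) < B (fun _ => i)) ∧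
    (IsB0Tensor B → ∀ i : Fin n,
      0 ≤ B (fun _ => i) ∧
        ∀ g : Fin m → Fin n, g ≠ (fun _ => i) → B (Fin.cons i g) ≤ B (fun _ => i)) := by
  constructor
  · intro hB i
    obtain ⟨hSpos, hoff⟩ := hB i
    have hkey := keyB0 B i (fun g hg => (hoff g hg).le)
    have hposc : (0:ℝ) < (1 / (n : ℝ) ^ m) * ∑ f : Fin m → Fin n, B (Fin.cons i f) := by
      have hN : (0:ℝ) < (n:ℝ)^m := by
        have : 0 < n := i.pos
        positivity
      positivity
    exact ⟨lt_of_lt_of_le hposc hkey, fun g hg => lt_of_lt_of_le (hoff g hg) hkey⟩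
  · intro hB i
    obtain ⟨hSpos, hoff⟩ := hB i
    have hkey := keyB0 B i hoff
    have hposc : (0:ℝ) ≤ (1 / (n : ℝ) ^ m) * ∑ f : Fin m → Fin n, B (Fin.cons i f) := by
      have hN : (0:ℝ) < (n:ℝ)^m := by
        have : 0 < n := i.pos
        positivity
      positivity
    exact ⟨le_trans hposc hkey, fun g hg => le_trans (hoff g hg) hkey⟩
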